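/- arXiv:1410.1189 — 2 statements merged into one kernel-verified Lean document; each statement's English description precedes it below -/
import Mathlib

section
/- Let (sₙ) be a sequence of i.i.d. Steinhaus random variables on a probability space (Ω,ℙ), and define T : L¹(Ω,ℙ) → c₀ by Tf = (∫ f·sₙ dℙ)ₙ. Then the adjoint map T* : ℓ¹ → L^∞(Ω,ℙ), sending a = (aₙ) to Σₙ aₙ sₙ, is an isometry: ‖Σₙ aₙ sₙ‖_{L^∞} = Σₙ |aₙ| for all a ∈ ℓ¹. -/
open MeasureTheory ProbabilityTheory

noncomputable def steinhausLaw : Measure ℂ :=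
  Measure.map (fun t : ℝ => Complex.exp (2 * Real.pi * t * Complex.I))
    (volume.restrict (Set.Ioc (0 : ℝ) 1))

noncomputable def circMap (t : ℝ) : ℂ := Complex.exp (2 * Real.pi * t * Complex.I)

lemma circMap_cont : Continuous circMap := by
  unfold circMap; fun_prop

lemma circMap_norm (t : ℝ) : ‖circMap t‖ = 1 := by
  simp only [circMap, Complex.norm_exp]
  norm_num [Complex.mul_re, Complex.I_re, Complex.I_im]

lemma circMap_surj {z : ℂ} (hz : ‖z‖ = 1) : ∃ t ∈ Set.Ioc (0:ℝ) 1, circMap t = z := by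
  have habs : ‖z‖ = 1 := hz
  have hz' : Complex.exp (Complex.arg z * Complex.I) = z := by
    have := Complex.norm_mul_exp_arg_mul_I z
    rwa [habs, Complex.ofReal_one, one_mul] at this
  have hπ : (0:ℝ) < 2 * Real.pi := by positivity
  set t₀ : ℝ := Complex.arg z / (2 * Real.pi) with ht₀
  have key : circMap t₀ = z := by
    rw [circMap]
    rw [show ((2:ℂ) * Real.pi * t₀ * Complex.I) = ((2 * Real.pi * t₀ : ℝ) : ℂ) * Complex.I by
      push_cast; ring]
    rw [show (2 * Real.pi * t₀ : ℝ) = Complex.arg z by rw [ht₀]; field_simp]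
    exact hz'
  have harg := Complex.arg_mem_Ioc z
  have h1 : t₀ ≤ 1/2 := by
    rw [ht₀, div_le_iff₀ hπ]
    linarith [harg.2, Real.pi_pos]
  have h2 : -(1/2) < t₀ := by
    rw [ht₀, lt_div_iff₀ hπ]
    have := harg.1; linarith
  by_cases hpos : 0 < t₀
  · exact ⟨t₀, ⟨hpos, by linarith⟩, key⟩
  · refine ⟨t₀ + 1, ⟨by linarith [not_lt.mp hpos], by linarith [not_lt.mp hpos]⟩, ?_⟩
    rw [circMap]
    have : (2:ℂ) * Real.pi * (t₀ + 1 : ℝ) * Complex.I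
        = 2 * Real.pi * t₀ * Complex.I + 2 * Real.pi * Complex.I := by push_cast; ring
    rw [this, Complex.exp_add, Complex.exp_two_pi_mul_I, mul_one]
    exact key

lemma steinhausLaw_eq (B : Set ℂ) (hB : MeasurableSet B) :
    steinhausLaw B = (volume.restrict (Set.Ioc (0:ℝ) 1)) (circMap ⁻¹' B) := by
  rw [steinhausLaw]
  exact Measure.map_apply circMap_cont.measurable hB

lemma steinhausLaw_norm_ne_one : steinhausLaw {z : ℂ | ‖z‖ ≠ 1} = 0 := by
  have hB : MeasurableSet {z : ℂ | ‖z‖ ≠ 1} :=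
    ((measurableSet_singleton (1:ℝ)).preimage measurable_norm).compl
  rw [steinhausLaw_eq _ hB]
  have : circMap ⁻¹' {z : ℂ | ‖z‖ ≠ 1} = ∅ := by
    ext t
    simpa using circMap_norm t
  rw [Measure.restrict_apply (by
    exact hB.preimage circMap_cont.measurable), this, Set.empty_inter, measure_empty]

lemma steinhausLaw_ball_pos {z : ℂ} (hz : ‖z‖ = 1) {η : ℝ} (hη : 0 < η) :
    0 < steinhausLaw (Metric.ball z η) := by
  obtain ⟨t₀, ht₀, hct₀⟩ := circMap_surj hz
  rw [steinhausLaw_eq _ measurableSet_ball]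
  have hopen : IsOpen (circMap ⁻¹' Metric.ball z η) :=
    Metric.isOpen_ball.preimage circMap_cont
  have hmem : t₀ ∈ circMap ⁻¹' Metric.ball z η := by
    simp [hct₀, Metric.mem_ball, hη]
  obtain ⟨δ, hδ, hball⟩ := Metric.isOpen_iff.mp hopen t₀ hmem
  set δ' : ℝ := min δ t₀ with hδ'
  have hδ'pos : 0 < δ' := lt_min hδ ht₀.1
  have hsub : Set.Ioc (t₀ - δ') t₀ ⊆ circMap ⁻¹' Metric.ball z η ∩ Set.Ioc (0:ℝ) 1 := by
    intro x hx
    constructor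
    · apply hball
      rw [Real.ball_eq_Ioo]
      constructor
      · have : δ' ≤ δ := min_le_left _ _
        linarith [hx.1]
      · linarith [hx.2, hδ]
    · constructor
      · have : δ' ≤ t₀ := min_le_right _ _
        linarith [hx.1]
      · linarith [hx.2, ht₀.2]
  calc (0:ENNReal) < ENNReal.ofReal δ' := by simpa using hδ'pos
    _ = volume (Set.Ioc (t₀ - δ') t₀) := by rw [Real.volume_Ioc]; norm_num
    _ ≤ volume (circMap ⁻¹' Metric.ball z η ∩ Set.Ioc (0:ℝ) 1) := measure_mono hsub
    _ = (volume.restrict (Set.Ioc (0:ℝ) 1)) (circMap ⁻¹' Metric.ball z η) := by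
        rw [Measure.restrict_apply (hopen.measurableSet)]

def IsSteinhausSeq {Ω : Type*} [MeasurableSpace Ω] (μ : Measure Ω) (s : ℕ → Ω → ℂ) : Prop :=
  (∀ n, Measurable (s n)) ∧ iIndepFun s μ ∧
    ∀ n, Measure.map (s n) μ = steinhausLaw

lemma ae_norm_one {Ω : Type*} [MeasurableSpace Ω] (μ : Measure Ω) [IsProbabilityMeasure μ]
    (s : ℕ → Ω → ℂ) (hs : IsSteinhausSeq μ s) : ∀ᵐ ω ∂μ, ∀ n, ‖s n ω‖ = 1 := by
  rw [MeasureTheory.ae_all_iff]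
  intro n
  have hB : MeasurableSet {z : ℂ | ‖z‖ ≠ 1} :=
    ((measurableSet_singleton (1:ℝ)).preimage measurable_norm).compl
  have : μ (s n ⁻¹' {z : ℂ | ‖z‖ ≠ 1}) = steinhausLaw {z : ℂ | ‖z‖ ≠ 1} := by
    rw [← hs.2.2 n, Measure.map_apply (hs.1 n) hB]
  have h0 : μ (s n ⁻¹' {z : ℂ | ‖z‖ ≠ 1}) = 0 := by
    rw [this, steinhausLaw_norm_ne_one]
  rw [MeasureTheory.ae_iff]
  exact h0

/-- The adjoint `T* : ℓ¹ → L^∞(Ω,μ)`, `a ↦ Σₙ aₙ sₙ`, of the map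
`T : L¹ → c₀`, `Tf = (∫ f sₙ)ₙ`, is an isometry:
`‖Σₙ aₙ sₙ‖_{L^∞} = Σₙ |aₙ|` for every `a ∈ ℓ¹`. -/
theorem stmt2 {Ω : Type*} [MeasurableSpace Ω] (μ : Measure Ω) [IsProbabilityMeasure μ]
    (s : ℕ → Ω → ℂ) (hs : IsSteinhausSeq μ s)
    (a : ℕ → ℂ) (ha : Summable fun n => ‖a n‖) :
    eLpNorm (fun ω => ∑' n, a n * s n ω) ⊤ μ = ENNReal.ofReal (∑' n, ‖a n‖) := by
  obtain ⟨hm, hind, hlaw⟩ := hs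
  set S : ℝ := ∑' n, ‖a n‖ with hSdef
  have hS0 : 0 ≤ S := tsum_nonneg (fun n => norm_nonneg _)
  have hae1 : ∀ᵐ ω ∂μ, ∀ n, ‖s n ω‖ = 1 := ae_norm_one μ s ⟨hm, hind, hlaw⟩
  have hsummand : ∀ ω, (∀ n, ‖s n ω‖ = 1) →
      Summable (fun n => ‖a n * s n ω‖) := by
    intro ω hω
    have : (fun n => ‖a n * s n ω‖) = fun n => ‖a n‖ := by
      funext n; rw [norm_mul, hω n, mul_one]
    rw [this]; exact ha
  have hbound : ∀ ω, (∀ n, ‖s n ω‖ = 1) → ‖∑' n, a n * s n ω‖ ≤ S := by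
    intro ω hω
    calc ‖∑' n, a n * s n ω‖ ≤ ∑' n, ‖a n * s n ω‖ :=
          norm_tsum_le_tsum_norm (hsummand ω hω)
      _ = S := by
          rw [hSdef]; congr 1; funext n; rw [norm_mul, hω n, mul_one]
  rw [eLpNorm_exponent_top]
  refine le_antisymm ?_ ?_
  · apply eLpNormEssSup_le_of_ae_bound (C := S)
    filter_upwards [hae1] with ω hω using hbound ω hω
  · -- lower bound
    by_contra hlt
    push_neg at hlt
    set X := eLpNormEssSup (fun ω => ∑' n, a n * s n ω) μ with hXdef
    have hXne : X ≠ ⊤ := (hlt.trans ENNReal.ofReal_lt_top).ne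
    have hXS : X.toReal < S := by
      rwa [ENNReal.lt_ofReal_iff_toReal_lt hXne] at hlt
    set r : ℝ := (X.toReal + S) / 2 with hrdef
    have hr1 : X.toReal < r := by
      rw [hrdef]; linarith
    have hr2 : r < S := by rw [hrdef]; linarith
    have hXr : X < ENNReal.ofReal r := (ENNReal.lt_ofReal_iff_toReal_lt hXne).2 hr1
    have hae2 : ∀ᵐ ω ∂μ, ‖∑' n, a n * s n ω‖ < r := by
      have hXr' : essSup (fun ω => (‖∑' n, a n * s n ω‖₊ : ENNReal)) μ < ENNReal.ofReal r := hXr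
      have h := ae_lt_of_essSup_lt hXr'
      filter_upwards [h] with ω hω
      rw [← ENNReal.ofReal_lt_ofReal_iff_of_nonneg (norm_nonneg _),
        ofReal_norm]
      exact hω
    set ε : ℝ := (S - r) / 4 with hεdef
    have hε : 0 < ε := by rw [hεdef]; linarith
    -- choose N
    have htend := ha.hasSum.tendsto_sum_nat
    obtain ⟨N, hN⟩ := (htend.eventually (eventually_gt_nhds (show S - ε/2 < S by linarith))).exists
    set P : ℝ := ∑ n ∈ Finset.range N, ‖a n‖ with hPdef
    have hP : S - ε/2 < P := hN
    have hPle : P ≤ S := Summable.sum_le_tsum _ (fun i _ => norm_nonneg _) ha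
    set η : ℝ := ε / (2 * (S + 1)) with hηdef
    have hη : 0 < η := by rw [hηdef]; positivity
    -- the target directions
    set z : ℕ → ℂ := fun n => if a n = 0 then 1 else (starRingEnd ℂ) (a n) / (‖a n‖ : ℂ)
      with hzdef
    have hz1 : ∀ n, ‖z n‖ = 1 := by
      intro n
      rw [hzdef]
      by_cases h : a n = 0
      · simp [h]
      · have hne : ‖a n‖ ≠ 0 := norm_ne_zero_iff.mpr h
        simp only [if_neg h, norm_div, Complex.norm_conj]
        rw [Complex.norm_real, norm_norm, div_self hne]
    have hz2 : ∀ n, a n * z n = (‖a n‖ : ℂ) := by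
      intro n
      rw [hzdef]
      by_cases h : a n = 0
      · simp [h]
      · have hne : (‖a n‖ : ℂ) ≠ 0 := by
          simpa using norm_ne_zero_iff.mpr h
        simp only [if_neg h]
        rw [← mul_div_assoc, div_eq_iff hne, Complex.mul_conj, Complex.normSq_eq_norm_sq]
        norm_cast
        ring
    -- the event
    set E : Set Ω := ⋂ n ∈ Finset.range N, s n ⁻¹' Metric.ball (z n) η with hEdef
    have hE : μ E = ∏ n ∈ Finset.range N, μ (s n ⁻¹' Metric.ball (z n) η) :=
      hind.measure_inter_preimage_eq_mul (Finset.range N)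
        (sets := fun n => Metric.ball (z n) η) (fun i _ => measurableSet_ball)
    have hEpos : μ E ≠ 0 := by
      rw [hE, Finset.prod_ne_zero_iff]
      intro n _
      have : μ (s n ⁻¹' Metric.ball (z n) η) = steinhausLaw (Metric.ball (z n) η) := by
        rw [← hlaw n, Measure.map_apply (hm n) measurableSet_ball]
      rw [this]
      exact (steinhausLaw_ball_pos (hz1 n) hη).ne'
    -- find a point
    set C : Set Ω := {ω | ¬ ((∀ n, ‖s n ω‖ = 1) ∧ ‖∑' n, a n * s n ω‖ < r)} with hCdef
    have hC : μ C = 0 := by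
      have := hae1.and hae2
      rwa [MeasureTheory.ae_iff] at this
    have hEC : μ (E ∩ Cᶜ) ≠ 0 := by
      intro h0
      apply hEpos
      have hle : μ E ≤ 0 := by
        calc μ E = μ ((E ∩ C) ∪ (E ∩ Cᶜ)) := by rw [Set.inter_union_compl]
          _ ≤ μ (E ∩ C) + μ (E ∩ Cᶜ) := measure_union_le _ _
          _ ≤ μ C + 0 := by
              rw [h0]; gcongr; exact Set.inter_subset_right
          _ = 0 := by rw [hC, add_zero]
      exact le_antisymm hle zero_le
    obtain ⟨ω, hωE, hωC⟩ := nonempty_of_measure_ne_zero hEC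
    rw [hCdef, Set.mem_compl_iff, Set.mem_setOf_eq, not_not] at hωC
    obtain ⟨hω1, hω2⟩ := hωC
    -- estimates at ω
    have hωball : ∀ n ∈ Finset.range N, ‖s n ω - z n‖ < η := by
      intro n hn
      have := Set.mem_iInter₂.mp hωE n hn
      rwa [Set.mem_preimage, Metric.mem_ball, dist_eq_norm] at this
    have hsummable : Summable (fun n => a n * s n ω) :=
      Summable.of_norm (hsummand ω hω1)
    have hsplit := Summable.sum_add_tsum_nat_add N hsummable
    -- tail bound
    have htailnorms : Summable (fun k => ‖a (k + N) * s (k + N) ω‖) :=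
      ((summable_nat_add_iff N).mpr (hsummand ω hω1))
    have htail : ‖∑' k, a (k + N) * s (k + N) ω‖ ≤ S - P := by
      have h1 : ‖∑' k, a (k + N) * s (k + N) ω‖ ≤ ∑' k, ‖a (k + N) * s (k + N) ω‖ :=
        norm_tsum_le_tsum_norm htailnorms
      have h2 : ∑' k, ‖a (k + N) * s (k + N) ω‖ = ∑' k, ‖a (k + N)‖ := by
        congr 1; funext k; rw [norm_mul, hω1 _, mul_one]
      have h3 : P + ∑' k, ‖a (k + N)‖ = S := Summable.sum_add_tsum_nat_add N ha
      rw [h2] at h1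
      linarith
    -- head bound
    have hhead : ‖(∑ n ∈ Finset.range N, a n * s n ω) - (P : ℂ)‖ ≤ η * P := by
      have hPc : (P : ℂ) = ∑ n ∈ Finset.range N, a n * z n := by
        rw [hPdef]
        push_cast
        exact Finset.sum_congr rfl (fun n _ => (hz2 n).symm)
      rw [hPc, ← Finset.sum_sub_distrib]
      calc ‖∑ n ∈ Finset.range N, (a n * s n ω - a n * z n)‖
          ≤ ∑ n ∈ Finset.range N, ‖a n * s n ω - a n * z n‖ := norm_sum_le _ _
        _ ≤ ∑ n ∈ Finset.range N, ‖a n‖ * η := by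
            apply Finset.sum_le_sum
            intro n hn
            rw [← mul_sub, norm_mul]
            exact mul_le_mul_of_nonneg_left (hωball n hn).le (norm_nonneg _)
        _ = η * P := by rw [hPdef, ← Finset.sum_mul]; ring
    have hηP : η * P ≤ ε / 2 := by
      rw [hηdef]
      rw [div_mul_eq_mul_div, div_le_div_iff₀ (by positivity) (by norm_num)]
      nlinarith
    have hheadnorm : P - ε/2 ≤ ‖∑ n ∈ Finset.range N, a n * s n ω‖ := by
      have h1 : ‖(P : ℂ)‖ = P := by
        rw [Complex.norm_real, Real.norm_of_nonneg]
        exact Finset.sum_nonneg (fun i _ => norm_nonneg _)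
      have h2 := norm_sub_norm_le (∑ n ∈ Finset.range N, a n * s n ω) (P : ℂ)
      have := hhead.trans hηP
      -- ‖head‖ ≥ ‖P‖ - ‖head - P‖
      have h3 : ‖(P:ℂ)‖ - ‖(∑ n ∈ Finset.range N, a n * s n ω) - (P : ℂ)‖
          ≤ ‖∑ n ∈ Finset.range N, a n * s n ω‖ := by
        have := norm_sub_norm_le ((P:ℂ)) (∑ n ∈ Finset.range N, a n * s n ω)
        rw [← norm_neg ((P:ℂ) - _), neg_sub] at this
        linarith
      linarith
    have hfinal : r < ‖∑' n, a n * s n ω‖ := by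
      have h4 : ‖∑' n, a n * s n ω‖ ≥
          ‖∑ n ∈ Finset.range N, a n * s n ω‖ - ‖∑' k, a (k + N) * s (k + N) ω‖ := by
        rw [← hsplit]
        have h5 := norm_sub_le ((∑ n ∈ Finset.range N, a n * s n ω)
          + ∑' k, a (k + N) * s (k + N) ω) (∑' k, a (k + N) * s (k + N) ω)
        simp only [add_sub_cancel_right] at h5
        linarith
      have : r = S - 4 * ε := by rw [hεdef]; ring
      linarith
    linarith
end

section
/- Let (sₙ) be a sequence of i.i.d. Steinhaus random variables on a probability space (Ω,ℙ). Then the map T : L¹(Ω,ℙ) → c₀, Tf = (∫ f·sₙ dℙ)ₙ, is a surjective quotient map: its image is all of c₀, and for every x ∈ c₀ and ε > 0 there exists f ∈ L¹ with Tf = x and ‖f‖₁ ≤ (1+ε)‖x‖_∞. -/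
open MeasureTheory ProbabilityTheory Filter
open scoped ENNReal NNReal

set_option linter.unusedSectionVars false
namespace SteinhausAux

lemma measurable_conj' : Measurable (starRingEnd ℂ) := Complex.continuous_conj.measurable

noncomputable def sc : ℝ → ℂ := fun t : ℝ => Complex.exp (2 * Real.pi * t * Complex.I)

lemma steinhausLaw_eq : steinhausLaw = Measure.map sc (volume.restrict (Set.Ioc (0 : ℝ) 1)) := rfl

lemma sc_eq (t : ℝ) : sc t = Complex.exp (((2 * Real.pi * t : ℝ) : ℂ) * Complex.I) := by
  unfold sc; push_cast; ring_nf

lemma abs_sc (t : ℝ) : ‖sc t‖ = 1 := by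
  rw [sc_eq]; exact Complex.norm_exp_ofReal_mul_I _

lemma measurable_sc : Measurable sc := by
  have : Continuous sc := by unfold sc; continuity
  exact this.measurable

instance : IsProbabilityMeasure (volume.restrict (Set.Ioc (0:ℝ) 1)) :=
  ⟨by simp [Real.volume_Ioc]⟩

instance : IsProbabilityMeasure steinhausLaw := by
  rw [steinhausLaw_eq]
  exact Measure.isProbabilityMeasure_map measurable_sc.aemeasurable

lemma momIoc (j k : ℕ) :
    (∫ t in Set.Ioc (0:ℝ) 1, (sc t)^j * (starRingEnd ℂ) (sc t)^k) =
      if j = k then 1 else 0 := by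
  have hpt : ∀ t : ℝ, (sc t)^j * (starRingEnd ℂ) (sc t)^k
      = Complex.exp ((((j:ℤ) - (k:ℤ)) * (2 * Real.pi * Complex.I)) * t) := by
    intro t
    unfold sc
    have hw : (starRingEnd ℂ) (Complex.exp (2 * Real.pi * t * Complex.I))
        = Complex.exp (-(2 * Real.pi * t * Complex.I)) := by
      rw [← Complex.exp_conj]
      congr 1
      simp only [map_mul, Complex.conj_I, Complex.conj_ofReal, map_ofNat]
      ring
    rw [hw, ← Complex.exp_nat_mul, ← Complex.exp_nat_mul, ← Complex.exp_add]
    congr 1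
    push_cast
    ring
  simp only [hpt]
  by_cases h : j = k
  · subst h
    simp only [sub_self, zero_mul]
    simp
  · rw [if_neg h]
    have hd : ((j:ℤ) - (k:ℤ)) ≠ 0 := by
      intro hc; apply h; omega
    have hc : (((j:ℤ) - (k:ℤ)) : ℂ) * (2 * Real.pi * Complex.I) ≠ 0 := by
      apply mul_ne_zero
      · exact_mod_cast hd
      · simp [Real.pi_ne_zero, Complex.I_ne_zero]
    rw [← intervalIntegral.integral_of_le zero_le_one,
      integral_exp_mul_complex hc]
    have h1 : (((j:ℤ) - (k:ℤ)) : ℂ) * (2 * Real.pi * Complex.I) * ((1:ℝ):ℂ)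
        = ((j - k : ℤ) : ℂ) * (2 * Real.pi * Complex.I) := by push_cast; ring
    have h0 : (((j:ℤ) - (k:ℤ)) : ℂ) * (2 * Real.pi * Complex.I) * ((0:ℝ):ℂ) = 0 := by
      push_cast; ring
    rw [h1, h0, Complex.exp_zero, Complex.exp_int_mul_two_pi_mul_I]
    simp


variable {Ω : Type*} [MeasurableSpace Ω] {μ : Measure Ω} [IsProbabilityMeasure μ] {s : ℕ → Ω → ℂ}

lemma comp_integral (hs : IsSteinhausSeq μ s) (n : ℕ) {g : ℂ → ℂ} (hg : Measurable g) :
    ∫ ω, g (s n ω) ∂μ = ∫ t in Set.Ioc (0:ℝ) 1, g (sc t) := by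
  rw [← integral_map (hs.1 n).aemeasurable hg.aestronglyMeasurable, hs.2.2 n, steinhausLaw_eq,
    integral_map measurable_sc.aemeasurable hg.aestronglyMeasurable]

lemma mom (hs : IsSteinhausSeq μ s) (n : ℕ) (j k : ℕ) :
    ∫ ω, (s n ω)^j * (starRingEnd ℂ) (s n ω)^k ∂μ = if j = k then 1 else 0 := by
  rw [comp_integral hs n (g := fun z => z^j * (starRingEnd ℂ) z^k)
    ((measurable_id.pow_const j).mul (measurable_conj'.pow_const k))]
  exact momIoc j k

lemma momC (hs : IsSteinhausSeq μ s) (n : ℕ) : ∫ ω, s n ω ∂μ = 0 := by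
  have := mom hs n 1 0
  simpa using this

lemma ae_circle (hs : IsSteinhausSeq μ s) : ∀ᵐ ω ∂μ, ∀ n, ‖s n ω‖ = 1 := by
  rw [ae_all_iff]
  intro n
  have hSmeas : MeasurableSet {z : ℂ | ‖z‖ = 1} :=
    (isClosed_eq continuous_norm continuous_const).measurableSet
  have h1 : μ (s n ⁻¹' {z | ‖z‖ = 1}) = 1 := by
    rw [← Measure.map_apply (hs.1 n) hSmeas, hs.2.2 n, steinhausLaw_eq,
      Measure.map_apply measurable_sc hSmeas]
    have : sc ⁻¹' {z | ‖z‖ = 1} = Set.univ := by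
      ext t; simp [abs_sc]
    rw [this]
    simp
  rw [ae_iff]
  have hc : {ω | ¬ ‖s n ω‖ = 1} = (s n ⁻¹' {z | ‖z‖ = 1})ᶜ := by
    ext ω; simp
  rw [hc, measure_compl (hs.1 n hSmeas) (measure_ne_top μ _), h1, measure_univ, tsub_self]

lemma integrable_comp (hs : IsSteinhausSeq μ s) (n : ℕ) {g : ℂ → ℂ} (hg : Measurable g) {C : ℝ}
    (hC : ∀ z, ‖z‖ = 1 → ‖g z‖ ≤ C) : Integrable (fun ω => g (s n ω)) μ := by
  refine Integrable.mono' (integrable_const C) (hg.comp (hs.1 n)).aestronglyMeasurable ?_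
  filter_upwards [ae_circle hs] with ω hω
  exact hC _ (hω n)


noncomputable def Dm (m : ℕ) (z : ℂ) : ℂ := ∑ j ∈ Finset.range m, z ^ j

noncomputable def Kr (m : ℕ) (l : ℝ) (b : ℂ) (z : ℂ) : ℝ :=
  (1 - l) + l * Complex.normSq (Dm m (b * z)) / m

lemma Kr_nonneg {m : ℕ} {l : ℝ} (hl0 : 0 ≤ l) (hl1 : l ≤ 1) (b z : ℂ) : 0 ≤ Kr m l b z := by
  unfold Kr
  have h1 : (0:ℝ) ≤ 1 - l := by linarith
  have h2 : 0 ≤ l * Complex.normSq (Dm m (b * z)) / m :=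
    div_nonneg (mul_nonneg hl0 (Complex.normSq_nonneg _)) (Nat.cast_nonneg m)
  linarith

lemma Dm_abs_le {m : ℕ} {w : ℂ} (hw : ‖w‖ ≤ 1) : ‖Dm m w‖ ≤ m := by
  unfold Dm
  calc ‖∑ j ∈ Finset.range m, w ^ j‖
      ≤ ∑ j ∈ Finset.range m, ‖w ^ j‖ := by
        simpa using norm_sum_le (Finset.range m) (fun j => w ^ j)
    _ ≤ ∑ _j ∈ Finset.range m, 1 := by
        apply Finset.sum_le_sum; intro j _
        rw [norm_pow]; exact pow_le_one₀ (norm_nonneg w) hw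
    _ = m := by simp

lemma Kr_le {m : ℕ} {l : ℝ} (hm : 1 ≤ m) (hl0 : 0 ≤ l) (hl1 : l ≤ 1) {b z : ℂ}
    (hb : ‖b‖ = 1) (hz : ‖z‖ = 1) : Kr m l b z ≤ m := by
  unfold Kr
  have hm' : (1:ℝ) ≤ m := by exact_mod_cast hm
  have hmpos : (0:ℝ) < m := by linarith
  have hbz : ‖b * z‖ ≤ 1 := by rw [norm_mul, hb, hz]; norm_num
  have h1 : Complex.normSq (Dm m (b * z)) ≤ (m:ℝ) * m := by
    rw [Complex.normSq_eq_norm_sq]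
    have h := Dm_abs_le (m := m) hbz
    nlinarith [norm_nonneg (Dm m (b*z))]
  have h2 : l * Complex.normSq (Dm m (b * z)) / m ≤ l * m := by
    rw [mul_div_assoc]
    apply mul_le_mul_of_nonneg_left _ hl0
    rw [div_le_iff₀ hmpos]; exact h1
  nlinarith

lemma Kr_cast (m : ℕ) (l : ℝ) (b z : ℂ) :
    ((Kr m l b z : ℝ) : ℂ) = ((1 - l : ℝ) : ℂ)
      + (l : ℂ) * (Dm m (b*z) * (starRingEnd ℂ) (Dm m (b*z))) / (m : ℂ) := by
  rw [Complex.mul_conj]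
  unfold Kr
  push_cast
  ring

lemma Dm_conj_expand (m : ℕ) (w : ℂ) :
    Dm m w * (starRingEnd ℂ) (Dm m w)
      = ∑ j ∈ Finset.range m, ∑ k ∈ Finset.range m, w^j * (starRingEnd ℂ) w^k := by
  unfold Dm
  rw [map_sum, Finset.sum_mul_sum]
  simp [map_pow]

lemma integral_double (hs : IsSteinhausSeq μ s) (n : ℕ) (m : ℕ) (c : ℕ → ℕ → ℂ) (e : ℕ → ℕ) :
    ∫ ω, ∑ j ∈ Finset.range m, ∑ k ∈ Finset.range m,
        c j k * ((s n ω)^(e j) * (starRingEnd ℂ) (s n ω)^k) ∂μ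
      = ∑ j ∈ Finset.range m, ∑ k ∈ Finset.range m, c j k * (if e j = k then 1 else 0) := by
  have hint : ∀ j k : ℕ,
      Integrable (fun ω => c j k * ((s n ω)^(e j) * (starRingEnd ℂ) (s n ω)^k)) μ := by
    intro j k
    apply integrable_comp hs n (g := fun z => c j k * (z^(e j) * (starRingEnd ℂ) z^k))
      (measurable_const.mul ((measurable_id.pow_const _).mul (measurable_conj'.pow_const _)))
      (C := ‖c j k‖)
    intro z hz
    have h1 : ‖z^(e j) * (starRingEnd ℂ) z^k‖ = 1 := by
      simp [map_mul, map_pow, Complex.norm_conj, hz]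
    rw [norm_mul, h1, mul_one]
  rw [integral_finset_sum _ (fun j _ => integrable_finset_sum _ (fun k _ => hint j k))]
  refine Finset.sum_congr rfl fun j _ => ?_
  rw [integral_finset_sum _ (fun k _ => hint j k)]
  refine Finset.sum_congr rfl fun k _ => ?_
  rw [MeasureTheory.integral_const_mul, mom hs n (e j) k]

lemma momentA (hs : IsSteinhausSeq μ s) (n : ℕ) (m : ℕ) (hm : 1 ≤ m) (l : ℝ) {b : ℂ}
    (hb : b * (starRingEnd ℂ) b = 1) :
    ∫ ω, ((Kr m l b (s n ω) : ℝ) : ℂ) ∂μ = 1 := by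
  have hmC : (m:ℂ) ≠ 0 := Nat.cast_ne_zero.mpr (by omega)
  have expand : ∀ z : ℂ, ((Kr m l b z : ℝ) : ℂ) = ((1 - l : ℝ) : ℂ)
      + ∑ j ∈ Finset.range m, ∑ k ∈ Finset.range m,
          (((l : ℂ)/m) * (b^j * (starRingEnd ℂ) b^k)) * (z^j * (starRingEnd ℂ) z^k) := by
    intro z
    rw [Kr_cast, Dm_conj_expand]
    congr 1
    rw [Finset.mul_sum, Finset.sum_div]
    refine Finset.sum_congr rfl fun j _ => ?_
    rw [Finset.mul_sum, Finset.sum_div]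
    refine Finset.sum_congr rfl fun k _ => ?_
    rw [mul_pow, map_mul, mul_pow]
    ring
  simp only [expand]
  have hint : Integrable (fun ω => ∑ j ∈ Finset.range m, ∑ k ∈ Finset.range m,
      (((l : ℂ)/m) * (b^j * (starRingEnd ℂ) b^k)) * ((s n ω)^j * (starRingEnd ℂ) (s n ω)^k)) μ := by
    apply integrable_finset_sum
    intro j _
    apply integrable_finset_sum
    intro k _
    apply integrable_comp hs n
      (g := fun z => (((l : ℂ)/m) * (b^j * (starRingEnd ℂ) b^k)) * (z^j * (starRingEnd ℂ) z^k))
      (measurable_const.mul ((measurable_id.pow_const _).mul (measurable_conj'.pow_const _)))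
      (C := ‖((l : ℂ)/m) * (b^j * (starRingEnd ℂ) b^k)‖)
    intro z hz
    have h1 : ‖z^j * (starRingEnd ℂ) z^k‖ = 1 := by
      simp [map_mul, map_pow, Complex.norm_conj, hz]
    rw [norm_mul, h1, mul_one]
  rw [integral_add (integrable_const _) hint, integral_const,
    integral_double hs n m _ (fun j => j)]
  have hsum : ∑ j ∈ Finset.range m, ∑ k ∈ Finset.range m,
      (((l:ℂ)/m) * (b^j * (starRingEnd ℂ) b^k)) * (if j = k then 1 else 0) = (l:ℂ) := by
    have h1 : ∀ j ∈ Finset.range m, ∑ k ∈ Finset.range m,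
        (((l:ℂ)/m) * (b^j * (starRingEnd ℂ) b^k)) * (if j = k then 1 else 0) = (l:ℂ)/m := by
      intro j hj
      simp only [mul_ite, mul_one, mul_zero]
      rw [Finset.sum_ite_eq (Finset.range m) j
        (fun k => ((l:ℂ)/m) * (b^j * (starRingEnd ℂ) b^k)), if_pos hj, ← mul_pow, hb, one_pow,
        mul_one]
    rw [Finset.sum_congr rfl h1, Finset.sum_const, Finset.card_range, nsmul_eq_mul,
      mul_div_cancel₀ _ hmC]
  rw [hsum]
  simp [measure_univ]

lemma momentB (hs : IsSteinhausSeq μ s) (n : ℕ) (m : ℕ) (hm : 1 ≤ m) (l : ℝ) {b : ℂ}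
    (hb : b * (starRingEnd ℂ) b = 1) :
    ∫ ω, ((Kr m l b (s n ω) : ℝ) : ℂ) * s n ω ∂μ
      = ((l * (1 - 1/(m:ℝ)) : ℝ) : ℂ) * (starRingEnd ℂ) b := by
  have hmC : (m:ℂ) ≠ 0 := Nat.cast_ne_zero.mpr (by omega)
  have hmR : (m:ℝ) ≠ 0 := Nat.cast_ne_zero.mpr (by omega)
  have expand : ∀ z : ℂ, ((Kr m l b z : ℝ) : ℂ) * z = ((1 - l : ℝ) : ℂ) * z
      + ∑ j ∈ Finset.range m, ∑ k ∈ Finset.range m,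
          (((l : ℂ)/m) * (b^j * (starRingEnd ℂ) b^k)) * (z^(j+1) * (starRingEnd ℂ) z^k) := by
    intro z
    rw [Kr_cast, Dm_conj_expand]
    rw [add_mul]
    congr 1
    rw [Finset.mul_sum, Finset.sum_div, Finset.sum_mul]
    refine Finset.sum_congr rfl fun j _ => ?_
    rw [Finset.mul_sum, Finset.sum_div, Finset.sum_mul]
    refine Finset.sum_congr rfl fun k _ => ?_
    rw [mul_pow, map_mul, mul_pow, pow_succ]
    ring
  simp only [expand]
  have hint : Integrable (fun ω => ∑ j ∈ Finset.range m, ∑ k ∈ Finset.range m,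
      (((l : ℂ)/m) * (b^j * (starRingEnd ℂ) b^k)) *
        ((s n ω)^(j+1) * (starRingEnd ℂ) (s n ω)^k)) μ := by
    apply integrable_finset_sum
    intro j _
    apply integrable_finset_sum
    intro k _
    apply integrable_comp hs n
      (g := fun z => (((l : ℂ)/m) * (b^j * (starRingEnd ℂ) b^k)) * (z^(j+1) * (starRingEnd ℂ) z^k))
      (measurable_const.mul ((measurable_id.pow_const _).mul (measurable_conj'.pow_const _)))
      (C := ‖((l : ℂ)/m) * (b^j * (starRingEnd ℂ) b^k)‖)
    intro z hz
    have h1 : ‖z^(j+1) * (starRingEnd ℂ) z^k‖ = 1 := by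
      simp [map_mul, map_pow, Complex.norm_conj, hz]
    rw [norm_mul, h1, mul_one]
  have hint1 : Integrable (fun ω => ((1 - l : ℝ) : ℂ) * s n ω) μ :=
    integrable_comp hs n (g := fun z => ((1 - l : ℝ) : ℂ) * z)
      (measurable_const.mul measurable_id) (C := ‖((1 - l : ℝ) : ℂ)‖)
      (fun z hz => by rw [norm_mul]; simp [hz])
  rw [integral_add hint1 hint, MeasureTheory.integral_const_mul, momC hs n, mul_zero, zero_add,
    integral_double hs n m _ (fun j => j + 1)]
  have h1 : ∀ j ∈ Finset.range m, ∑ k ∈ Finset.range m,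
      (((l:ℂ)/m) * (b^j * (starRingEnd ℂ) b^k)) * (if j + 1 = k then 1 else 0)
        = if j + 1 ∈ Finset.range m then ((l:ℂ)/m) * (starRingEnd ℂ) b else 0 := by
    intro j hj
    simp only [mul_ite, mul_one, mul_zero]
    rw [Finset.sum_ite_eq (Finset.range m) (j+1)
      (fun k => ((l:ℂ)/m) * (b^j * (starRingEnd ℂ) b^k))]
    have : b^j * (starRingEnd ℂ) b^(j+1) = (starRingEnd ℂ) b := by
      rw [pow_succ, ← mul_assoc, ← mul_pow, hb, one_pow, one_mul]
    rw [this]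
  rw [Finset.sum_congr rfl h1]
  have h2 : ∑ j ∈ Finset.range m, (if j + 1 ∈ Finset.range m then ((l:ℂ)/m) * (starRingEnd ℂ) b else 0)
      = (m - 1 : ℕ) • (((l:ℂ)/m) * (starRingEnd ℂ) b) := by
    rw [← Finset.sum_subset (Finset.range_subset_range.mpr (Nat.sub_le m 1))
      (fun j hj hnj => by rw [if_neg]; simp only [Finset.mem_range] at *; omega)]
    rw [Finset.sum_congr rfl (fun j hj => by
      rw [if_pos]; simp only [Finset.mem_range] at *; omega), Finset.sum_const, Finset.card_range]
  rw [h2, nsmul_eq_mul]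
  have hcast : ((m - 1 : ℕ) : ℂ) = (m : ℂ) - 1 := by
    have := Nat.cast_sub (R := ℂ) hm
    simpa using this
  rw [hcast]
  push_cast
  field_simp


lemma indep_integral_mul {X Y : Ω → ℂ} (h : IndepFun X Y μ) (hX : Integrable X μ)
    (hY : Integrable Y μ) : ∫ ω, X ω * Y ω ∂μ = (∫ ω, X ω ∂μ) * ∫ ω, Y ω ∂μ := by
  have hXY : Integrable (X * Y) μ := h.integrable_mul hX hY
  have mre : Measurable (Complex.re) := Complex.measurable_re
  have mim : Measurable (Complex.im) := Complex.measurable_im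
  have hXre : Integrable (fun ω => (X ω).re) μ := hX.re
  have hXim : Integrable (fun ω => (X ω).im) μ := hX.im
  have hYre : Integrable (fun ω => (Y ω).re) μ := hY.re
  have hYim : Integrable (fun ω => (Y ω).im) μ := hY.im
  have hrr : IndepFun (fun ω => (X ω).re) (fun ω => (Y ω).re) μ := h.comp mre mre
  have hri : IndepFun (fun ω => (X ω).re) (fun ω => (Y ω).im) μ := h.comp mre mim
  have hir : IndepFun (fun ω => (X ω).im) (fun ω => (Y ω).re) μ := h.comp mim mre
  have hii : IndepFun (fun ω => (X ω).im) (fun ω => (Y ω).im) μ := h.comp mim mim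
  have irr : ∫ ω, (X ω).re * (Y ω).re ∂μ = (∫ ω, (X ω).re ∂μ) * ∫ ω, (Y ω).re ∂μ :=
    hrr.integral_mul_eq_mul_integral hXre.aestronglyMeasurable hYre.aestronglyMeasurable
  have iri : ∫ ω, (X ω).re * (Y ω).im ∂μ = (∫ ω, (X ω).re ∂μ) * ∫ ω, (Y ω).im ∂μ :=
    hri.integral_mul_eq_mul_integral hXre.aestronglyMeasurable hYim.aestronglyMeasurable
  have iir : ∫ ω, (X ω).im * (Y ω).re ∂μ = (∫ ω, (X ω).im ∂μ) * ∫ ω, (Y ω).re ∂μ :=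
    hir.integral_mul_eq_mul_integral hXim.aestronglyMeasurable hYre.aestronglyMeasurable
  have iii : ∫ ω, (X ω).im * (Y ω).im ∂μ = (∫ ω, (X ω).im ∂μ) * ∫ ω, (Y ω).im ∂μ :=
    hii.integral_mul_eq_mul_integral hXim.aestronglyMeasurable hYim.aestronglyMeasurable
  have eXre : (∫ ω, X ω ∂μ).re = ∫ ω, (X ω).re ∂μ := by
    rw [← RCLike.re_to_complex]; exact (integral_re hX).symm
  have eXim : (∫ ω, X ω ∂μ).im = ∫ ω, (X ω).im ∂μ := by
    rw [← RCLike.im_to_complex]; exact (integral_im hX).symm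
  have eYre : (∫ ω, Y ω ∂μ).re = ∫ ω, (Y ω).re ∂μ := by
    rw [← RCLike.re_to_complex]; exact (integral_re hY).symm
  have eYim : (∫ ω, Y ω ∂μ).im = ∫ ω, (Y ω).im ∂μ := by
    rw [← RCLike.im_to_complex]; exact (integral_im hY).symm
  have hre : ∫ ω, (X ω * Y ω).re ∂μ
      = (∫ ω, (X ω).re ∂μ) * (∫ ω, (Y ω).re ∂μ) - (∫ ω, (X ω).im ∂μ) * ∫ ω, (Y ω).im ∂μ := by
    simp only [Complex.mul_re]
    have mrr : Integrable (fun ω => (X ω).re * (Y ω).re) μ := hrr.integrable_mul hXre hYre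
    have mii : Integrable (fun ω => (X ω).im * (Y ω).im) μ := hii.integrable_mul hXim hYim
    rw [integral_sub mrr mii, irr, iii]
  have him : ∫ ω, (X ω * Y ω).im ∂μ
      = (∫ ω, (X ω).re ∂μ) * (∫ ω, (Y ω).im ∂μ) + (∫ ω, (X ω).im ∂μ) * ∫ ω, (Y ω).re ∂μ := by
    simp only [Complex.mul_im]
    have mri : Integrable (fun ω => (X ω).re * (Y ω).im) μ := hri.integrable_mul hXre hYim
    have mir : Integrable (fun ω => (X ω).im * (Y ω).re) μ := hir.integrable_mul hXim hYre
    rw [integral_add mri mir, iri, iir]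
  apply Complex.ext
  · have h1 : (∫ ω, X ω * Y ω ∂μ).re = ∫ ω, (X ω * Y ω).re ∂μ := by
      rw [← RCLike.re_to_complex]; exact (integral_re hXY).symm
    rw [h1, hre, Complex.mul_re, eXre, eXim, eYre, eYim]
  · have h1 : (∫ ω, X ω * Y ω ∂μ).im = ∫ ω, (X ω * Y ω).im ∂μ := by
      rw [← RCLike.im_to_complex]; exact (integral_im hXY).symm
    rw [h1, him, Complex.mul_im, eXre, eXim, eYre, eYim]

lemma master (hs : IsSteinhausSeq μ s) (g : ℕ → ℂ → ℂ) (hg : ∀ n, Measurable (g n))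
    (C : ℕ → ℝ) (hC : ∀ n z, ‖z‖ = 1 → ‖g n z‖ ≤ C n) (S : Finset ℕ) :
    ∫ ω, ∏ n ∈ S, g n (s n ω) ∂μ = ∏ n ∈ S, ∫ ω, g n (s n ω) ∂μ := by
  classical
  have hint : ∀ T : Finset ℕ, Integrable (fun ω => ∏ n ∈ T, g n (s n ω)) μ := by
    intro T
    refine Integrable.mono' (integrable_const (∏ n ∈ T, C n))
      ((Finset.measurable_prod T fun n _ => (hg n).comp (hs.1 n)).aestronglyMeasurable) ?_
    filter_upwards [ae_circle hs] with ω hω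
    calc ‖∏ n ∈ T, g n (s n ω)‖ = ∏ n ∈ T, ‖g n (s n ω)‖ := by
          simp [norm_prod]
      _ ≤ ∏ n ∈ T, C n :=
          Finset.prod_le_prod (fun n _ => norm_nonneg _) (fun n _ => hC n _ (hω n))
  induction S using Finset.induction_on with
  | empty => simp
  | insert _ _ ha ih =>
    rename_i a T
    have h1 : iIndepFun (fun n => (g n) ∘ (s n)) μ :=
      hs.2.1.comp _ hg
    have h2 := h1.indepFun_finset_prod_of_notMem
      (fun n => (hg n).comp (hs.1 n)) ha
    have key : (∏ j ∈ T, (g j) ∘ (s j)) = fun ω => ∏ j ∈ T, g j (s j ω) := by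
      funext ω; simp [Finset.prod_apply]
    rw [key] at h2
    have h3 : IndepFun (fun ω => g a (s a ω)) (fun ω => ∏ j ∈ T, g j (s j ω)) μ := h2.symm
    simp only [Finset.prod_insert ha]
    rw [indep_integral_mul h3 (integrable_comp hs a (hg a) (hC a)) (hint T), ih]


lemma abs_bet {y : ℂ} (hy : y ≠ 0) :
    (starRingEnd ℂ) y / (‖y‖ : ℂ) * ((starRingEnd ℂ) ((starRingEnd ℂ) y / (‖y‖ : ℂ))) = 1 := by
  have ha : ((‖y‖ : ℝ):ℂ) ≠ 0 := by
    exact_mod_cast norm_ne_zero_iff.mpr hy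
  rw [map_div₀, Complex.conj_conj, Complex.conj_ofReal, div_mul_div_comm,
    ← Complex.normSq_eq_conj_mul_self, Complex.normSq_eq_norm_sq]
  push_cast
  field_simp

lemma block (hs : IsSteinhausSeq μ s) (S : Finset ℕ) (y : ℕ → ℂ) (R : ℝ) (m : ℕ)
    (hm : 2 ≤ m) (hR : 0 < R) (hy : ∀ n ∈ S, ‖y n‖ ≤ R * (1 - 1/m)) :
    ∃ r : Ω → ℝ, Measurable r ∧ (∀ ω, 0 ≤ r ω) ∧ Integrable r μ ∧ (∫ ω, r ω ∂μ) = R ∧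
      ∀ n, (∫ ω, (r ω : ℂ) * s n ω ∂μ) = if n ∈ S then y n else 0 := by
  classical
  have hmR : (1:ℝ) ≤ m := by exact_mod_cast Nat.one_le_of_lt hm
  have hm1 : 1 ≤ m := by omega
  have hfrac : (0:ℝ) < 1 - 1/m := by
    have h2 : (2:ℝ) ≤ m := by exact_mod_cast hm
    have : (1:ℝ)/m ≤ 1/2 := by
      apply one_div_le_one_div_of_le <;> linarith
    linarith
  set lam : ℕ → ℝ := fun n => if n ∈ S then ‖y n‖ / (R * (1 - 1/m)) else 0 with hlamdef
  set bet : ℕ → ℂ := fun n => if y n = 0 then 1 else (starRingEnd ℂ) (y n) / (‖y n‖ : ℂ)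
    with hbetdef
  have hbet1 : ∀ n, bet n * (starRingEnd ℂ) (bet n) = 1 := by
    intro n
    simp only [hbetdef]
    by_cases h : y n = 0
    · simp [h]
    · rw [if_neg h]; exact abs_bet h
  have habs_bet : ∀ n, ‖bet n‖ = 1 := by
    intro n
    have h := hbet1 n
    rw [Complex.mul_conj] at h
    have h2 : Complex.normSq (bet n) = 1 := by exact_mod_cast h
    have := Complex.normSq_eq_norm_sq (bet n)
    nlinarith [norm_nonneg (bet n)]
  have hlam0 : ∀ n, 0 ≤ lam n := by
    intro n
    simp only [hlamdef]
    split
    · positivity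
    · exact le_rfl
  have hlam1 : ∀ n, lam n ≤ 1 := by
    intro n
    simp only [hlamdef]
    split
    · rename_i h
      rw [div_le_one (by positivity)]
      exact hy n h
    · norm_num
  set r : Ω → ℝ := fun ω => R * ∏ n ∈ S, Kr m (lam n) (bet n) (s n ω) with hrdef
  have hKmeas : ∀ n, Measurable (fun z => Kr m (lam n) (bet n) z) := by
    intro n
    unfold Kr Dm
    have hc : Continuous fun z : ℂ => (1 - lam n) + lam n *
        Complex.normSq (∑ j ∈ Finset.range m, (bet n * z) ^ j) / m := by
      apply continuous_const.add
      apply Continuous.div_const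
      apply continuous_const.mul
      exact Complex.continuous_normSq.comp (by continuity)
    exact hc.measurable
  have hrmeas : Measurable r := by
    apply measurable_const.mul
    apply Finset.measurable_prod
    intro n _
    exact (hKmeas n).comp (hs.1 n)
  have hrnn : ∀ ω, 0 ≤ r ω := by
    intro ω
    apply mul_nonneg hR.le
    exact Finset.prod_nonneg fun n _ => Kr_nonneg (hlam0 n) (hlam1 n) _ _
  have hrint : Integrable r μ := by
    refine Integrable.mono' (integrable_const (R * m ^ S.card)) hrmeas.aestronglyMeasurable ?_
    filter_upwards [ae_circle hs] with ω hω
    rw [Real.norm_eq_abs, abs_of_nonneg (hrnn ω)]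
    simp only [hrdef]
    apply mul_le_mul_of_nonneg_left _ hR.le
    calc ∏ n ∈ S, Kr m (lam n) (bet n) (s n ω) ≤ ∏ _n ∈ S, (m:ℝ) :=
          Finset.prod_le_prod (fun n _ => Kr_nonneg (hlam0 n) (hlam1 n) _ _)
            (fun n _ => Kr_le hm1 (hlam0 n) (hlam1 n) (habs_bet n) (hω n))
      _ = (m:ℝ) ^ S.card := by rw [Finset.prod_const]
  -- the complex-valued product representation
  have hcast : ∀ ω, ((r ω : ℝ) : ℂ)
      = (R:ℂ) * ∏ n ∈ S, ((Kr m (lam n) (bet n) (s n ω) : ℝ) : ℂ) := by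
    intro ω
    simp only [hrdef]
    push_cast
    rfl
  -- integral of r equals R
  have hintC : ∫ ω, ((r ω : ℝ):ℂ) ∂μ = (R:ℂ) := by
    simp only [hcast]
    rw [MeasureTheory.integral_const_mul]
    rw [master hs (fun n z => ((Kr m (lam n) (bet n) z : ℝ) : ℂ))
      (fun n => Complex.measurable_ofReal.comp (hKmeas n)) (fun n => (m:ℝ))
      (fun n z hz => by
        rw [Complex.norm_real, Real.norm_eq_abs,
          abs_of_nonneg (Kr_nonneg (hlam0 n) (hlam1 n) _ _)]
        exact Kr_le hm1 (hlam0 n) (hlam1 n) (habs_bet n) hz) S]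
    rw [Finset.prod_congr rfl (fun n _ => momentA hs n m hm1 (lam n) (hbet1 n))]
    simp
  have hrR : ∫ ω, r ω ∂μ = R := by
    apply Complex.ofReal_injective
    rw [← hintC]
    exact (integral_ofReal (𝕜 := ℂ) (f := r)).symm
  refine ⟨r, hrmeas, hrnn, hrint, hrR, ?_⟩
  intro n
  by_cases hn : n ∈ S
  · rw [if_pos hn]
    -- g' family
    set g' : ℕ → ℂ → ℂ := fun k z => if k = n then ((Kr m (lam k) (bet k) z : ℝ):ℂ) * z
      else ((Kr m (lam k) (bet k) z : ℝ):ℂ) with hg'def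
    have hptw : ∀ ω, (r ω : ℂ) * s n ω = (R:ℂ) * ∏ k ∈ S, g' k (s k ω) := by
      intro ω
      rw [hcast, ← Finset.mul_prod_erase S _ hn, ← Finset.mul_prod_erase S (fun k => g' k (s k ω)) hn]
      have h1 : g' n (s n ω) = ((Kr m (lam n) (bet n) (s n ω) : ℝ):ℂ) * s n ω := by
        simp only [hg'def, if_pos rfl]
      have h2 : ∀ k ∈ S.erase n, g' k (s k ω) = ((Kr m (lam k) (bet k) (s k ω) : ℝ):ℂ) := by
        intro k hk
        simp only [hg'def, if_neg (Finset.ne_of_mem_erase hk)]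
      rw [h1, Finset.prod_congr rfl h2]
      ring
    rw [integral_congr_ae (Filter.Eventually.of_forall hptw), MeasureTheory.integral_const_mul]
    have hg'meas : ∀ k, Measurable (g' k) := by
      intro k
      simp only [hg'def]
      split
      · exact (Complex.measurable_ofReal.comp (hKmeas k)).mul measurable_id
      · exact Complex.measurable_ofReal.comp (hKmeas k)
    have hg'bound : ∀ k z, ‖z‖ = 1 → ‖g' k z‖ ≤ (m:ℝ) := by
      intro k z hz
      have hb : ‖((Kr m (lam k) (bet k) z : ℝ):ℂ)‖ ≤ m := by
        rw [Complex.norm_real, Real.norm_eq_abs,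
          abs_of_nonneg (Kr_nonneg (hlam0 k) (hlam1 k) _ _)]
        exact Kr_le hm1 (hlam0 k) (hlam1 k) (habs_bet k) hz
      simp only [hg'def]
      split
      · rw [norm_mul]
        calc ‖((Kr m (lam k) (bet k) z : ℝ):ℂ)‖ * ‖z‖
            ≤ (m:ℝ) * 1 := by
              apply mul_le_mul hb _ (norm_nonneg _) (Nat.cast_nonneg m)
              simp [hz]
          _ = m := mul_one _
      · exact hb
    rw [master hs g' hg'meas (fun _ => (m:ℝ)) hg'bound S]
    rw [← Finset.mul_prod_erase S _ hn]
    have hB : ∫ ω, g' n (s n ω) ∂μ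
        = ((lam n * (1 - 1/(m:ℝ)) : ℝ) : ℂ) * (starRingEnd ℂ) (bet n) := by
      have : ∀ ω, g' n (s n ω) = ((Kr m (lam n) (bet n) (s n ω) : ℝ):ℂ) * s n ω := by
        intro ω; simp only [hg'def, if_pos rfl]
      rw [integral_congr_ae (Filter.Eventually.of_forall this)]
      exact momentB hs n m hm1 (lam n) (hbet1 n)
    have hOne : ∀ k ∈ S.erase n, ∫ ω, g' k (s k ω) ∂μ = 1 := by
      intro k hk
      have : ∀ ω, g' k (s k ω) = ((Kr m (lam k) (bet k) (s k ω) : ℝ):ℂ) := by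
        intro ω; simp only [hg'def, if_neg (Finset.ne_of_mem_erase hk)]
      rw [integral_congr_ae (Filter.Eventually.of_forall this)]
      exact momentA hs k m hm1 (lam k) (hbet1 k)
    rw [hB, Finset.prod_congr rfl hOne, Finset.prod_const_one, mul_one]
    -- final arithmetic
    by_cases hy0 : y n = 0
    · have hlamn : lam n = 0 := by simp [hlamdef, hn, hy0]
      simp [hlamn, hy0]
    · have hlamn : lam n = ‖y n‖ / (R * (1 - 1/m)) := by simp [hlamdef, hn]
      have hbetn : bet n = (starRingEnd ℂ) (y n) / (‖y n‖ : ℂ) := by simp [hbetdef, hy0]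
      have hconj : (starRingEnd ℂ) (bet n) = y n / (‖y n‖ : ℂ) := by
        rw [hbetn, map_div₀, Complex.conj_conj, Complex.conj_ofReal]
      have hmne : ((m:ℝ)) ≠ 0 := by positivity
      have hm1' : ((m:ℝ)) - 1 ≠ 0 := by
        have : (1:ℝ) < m := by exact_mod_cast hm.trans_lt' (by omega)
        linarith
      have hlamval : (lam n * (1 - 1/(m:ℝ)) : ℝ) = ‖y n‖ / R := by
        rw [hlamn]
        field_simp
      rw [hconj, hlamval]
      have habsC : ((‖y n‖ : ℝ):ℂ) ≠ 0 := by
        exact_mod_cast norm_ne_zero_iff.mpr hy0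
      have hRC : (R:ℂ) ≠ 0 := by exact_mod_cast hR.ne'
      push_cast
      field_simp
  · rw [if_neg hn]
    set g' : ℕ → ℂ → ℂ := fun k z => if k = n then z
      else ((Kr m (lam k) (bet k) z : ℝ):ℂ) with hg'def
    have hptw : ∀ ω, (r ω : ℂ) * s n ω = (R:ℂ) * ∏ k ∈ insert n S, g' k (s k ω) := by
      intro ω
      rw [hcast, Finset.prod_insert hn]
      have h1 : g' n (s n ω) = s n ω := by simp only [hg'def, if_pos rfl]
      have h2 : ∀ k ∈ S, g' k (s k ω) = ((Kr m (lam k) (bet k) (s k ω) : ℝ):ℂ) := by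
        intro k hk
        have : k ≠ n := fun hkn => hn (hkn ▸ hk)
        simp only [hg'def, if_neg this]
      rw [h1, Finset.prod_congr rfl h2]
      ring
    rw [integral_congr_ae (Filter.Eventually.of_forall hptw), MeasureTheory.integral_const_mul]
    have hg'meas : ∀ k, Measurable (g' k) := by
      intro k
      simp only [hg'def]
      split
      · exact measurable_id
      · exact Complex.measurable_ofReal.comp (hKmeas k)
    have hg'bound : ∀ k z, ‖z‖ = 1 → ‖g' k z‖ ≤ (m:ℝ) := by
      intro k z hz
      simp only [hg'def]
      split
      · calc ‖z‖ = 1 := by simp [hz]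
          _ ≤ (m:ℝ) := hmR
      · rw [Complex.norm_real, Real.norm_eq_abs,
          abs_of_nonneg (Kr_nonneg (hlam0 k) (hlam1 k) _ _)]
        exact Kr_le hm1 (hlam0 k) (hlam1 k) (habs_bet k) hz
    rw [master hs g' hg'meas (fun _ => (m:ℝ)) hg'bound (insert n S), Finset.prod_insert hn]
    have h0 : ∫ ω, g' n (s n ω) ∂μ = 0 := by
      have : ∀ ω, g' n (s n ω) = s n ω := by intro ω; simp only [hg'def, if_pos rfl]
      rw [integral_congr_ae (Filter.Eventually.of_forall this)]
      exact momC hs n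
    rw [h0, zero_mul, mul_zero]


lemma ofReal_tsum_mul (r : ℕ → ℝ) (z : ℂ) :
    ((∑' j, r j : ℝ) : ℂ) * z = ∑' j, ((r j : ℂ) * z) := by
  by_cases hz : z = 0
  · simp [hz]
  by_cases h : Summable r
  · have hcast : ((∑' j, r j : ℝ) : ℂ) = ∑' j, ((r j : ℝ) : ℂ) := Complex.ofRealCLM.map_tsum h
    rw [hcast, tsum_mul_right]
  · have h2 : ¬ Summable (fun j => (r j : ℂ) * z) := by
      intro hc
      apply h
      have h3 : Summable (fun j => (r j : ℂ)) := by
        have := hc.mul_right z⁻¹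
        simpa [mul_assoc, mul_inv_cancel₀ hz] using this
      have h4 := h3.map Complex.reCLM Complex.reCLM.continuous
      simpa [Function.comp_def] using h4
    rw [tsum_eq_zero_of_not_summable h, tsum_eq_zero_of_not_summable h2,
      Complex.ofReal_zero, zero_mul]

end SteinhausAux

open SteinhausAux in
/-- The map `T : L¹(Ω,μ) → c₀`, `Tf = (∫ f sₙ)ₙ`, is a surjective quotient map:
every `x ∈ c₀` lifts, for every `ε > 0`, to some `f ∈ L¹` with `Tf = x` and
`‖f‖₁ ≤ (1+ε) ‖x‖_∞`. -/
theorem stmt3 {Ω : Type*} [MeasurableSpace Ω] (μ : Measure Ω) [IsProbabilityMeasure μ]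
    (s : ℕ → Ω → ℂ) (hs : IsSteinhausSeq μ s)
    (x : ℕ → ℂ) (hx : Tendsto x atTop (nhds 0)) (ε : ℝ) (hε : 0 < ε) :
    ∃ f : Ω → ℂ, Integrable f μ ∧ (∀ n, ∫ ω, f ω * s n ω ∂μ = x n) ∧
      ∫ ω, ‖f ω‖ ∂μ ≤ (1 + ε) * ⨆ n, ‖x n‖ := by
  classical
  have hxnorm : Tendsto (fun n => ‖x n‖) atTop (nhds 0) := by simpa using hx.norm
  have hbdd : BddAbove (Set.range fun n => ‖x n‖) := hxnorm.bddAbove_range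
  set M : ℝ := ⨆ n, ‖x n‖ with hMdef
  have hMle : ∀ n, ‖x n‖ ≤ M := fun n => le_ciSup hbdd n
  have hM0 : 0 ≤ M := (norm_nonneg (x 0)).trans (hMle 0)
  by_cases hMz : M = 0
  · refine ⟨0, integrable_zero _ _ _, ?_, ?_⟩
    · intro n
      have h1 : ‖x n‖ ≤ 0 := hMz ▸ hMle n
      have h2 : x n = 0 := norm_le_zero_iff.mp h1
      simp [h2]
    · simp [← hMdef, hMz]
  have hMpos : 0 < M := lt_of_le_of_ne hM0 (Ne.symm hMz)
  set ε' : ℝ := min ε 1 with hε'def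
  have hε'0 : 0 < ε' := lt_min hε one_pos
  have hε'ε : ε' ≤ ε := min_le_left _ _
  have hε'1 : ε' ≤ 1 := min_le_right _ _
  set a : ℝ := ε' / 4 with hadef
  have ha0 : 0 < a := by positivity
  have ha14 : a ≤ 1/4 := by rw [hadef]; linarith
  have ha1 : a < 1 := by linarith
  set m : ℕ := ⌈1/a⌉₊ + 1 with hmdef
  have hm2 : 2 ≤ m := by
    have : 0 < ⌈1/a⌉₊ := Nat.ceil_pos.mpr (by positivity)
    omega
  have hmR0 : (0:ℝ) < m := by positivity
  have hmain : (1:ℝ) ≤ (1 + a) * (1 - 1/(m:ℝ)) := by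
    have h1 : 1/a + 1 ≤ (m:ℝ) := by
      rw [hmdef]
      push_cast
      have := Nat.le_ceil (1/a)
      linarith
    have h2 : (1 + a) ≤ a * m := by
      rw [← div_le_iff₀' ha0]
      calc (1+a)/a = 1/a + 1 := by field_simp
        _ ≤ (m:ℝ) := h1
    have hmu : (m:ℝ) * (1/(m:ℝ)) = 1 := by field_simp
    have hu0 : 0 < 1/(m:ℝ) := by positivity
    nlinarith [mul_le_mul_of_nonneg_right h2 hu0.le]
  -- blocks
  have hfin : ∀ j : ℕ, (Set.Finite {n | M * a^(j+1) < ‖x n‖ ∧ ‖x n‖ ≤ M * a^j}) := by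
    intro j
    have hpos : 0 < M * a^(j+1) := by positivity
    have hev : ∀ᶠ n in atTop, ‖x n‖ < M * a^(j+1) := hxnorm.eventually (gt_mem_nhds hpos)
    obtain ⟨N, hN⟩ := eventually_atTop.1 hev
    apply Set.Finite.subset (Set.finite_Iio N)
    intro n hn
    simp only [Set.mem_Iio]
    by_contra hge
    exact absurd (hN n (by omega)) (not_lt.mpr hn.1.le)
  set S : ℕ → Finset ℕ := fun j => (hfin j).toFinset with hSdef
  have hSmem : ∀ j n, n ∈ S j ↔ (M * a^(j+1) < ‖x n‖ ∧ ‖x n‖ ≤ M * a^j) := by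
    intro j n
    rw [hSdef]
    exact (hfin j).mem_toFinset
  set R : ℕ → ℝ := fun j => ((1+a) * M) * a^j with hRdef
  have hRpos : ∀ j, 0 < R j := fun j => by rw [hRdef]; positivity
  have hcond : ∀ j, ∀ n ∈ S j, ‖x n‖ ≤ R j * (1 - 1/(m:ℝ)) := by
    intro j n hn
    have h1 : ‖x n‖ ≤ M * a^j := ((hSmem j n).mp hn).2
    calc ‖x n‖ ≤ M * a^j := h1
      _ = (M * a^j) * 1 := by ring
      _ ≤ (M * a^j) * ((1 + a) * (1 - 1/(m:ℝ))) := by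
          apply mul_le_mul_of_nonneg_left hmain (by positivity)
      _ = R j * (1 - 1/(m:ℝ)) := by rw [hRdef]; ring
  choose r hrmeas hrnn hrint hrR hrmom using fun j =>
    block hs (S j) x (R j) m hm2 (hRpos j) (hcond j)
  -- definition of f
  set F : Ω → ℝ≥0∞ := fun ω => ∑' j, ENNReal.ofReal (r j ω) with hFdef
  have hFmeas : Measurable F := by
    rw [hFdef]
    exact Measurable.ennreal_tsum (fun j => (hrmeas j).ennreal_ofReal)
  set f : Ω → ℂ := fun ω => (((F ω).toReal : ℝ) : ℂ) with hfdef
  have hfmeas : Measurable f := Complex.measurable_ofReal.comp hFmeas.ennreal_toReal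
  have hfpt : ∀ ω, f ω = ((∑' j, r j ω : ℝ) : ℂ) := by
    intro ω
    simp only [hfdef, hFdef]
    congr 1
    rw [ENNReal.tsum_toReal_eq (fun j => ENNReal.ofReal_ne_top)]
    exact tsum_congr fun j => ENNReal.toReal_ofReal (hrnn j ω)
  -- geometric sums
  have hRnn : ∀ j, 0 ≤ R j := fun j => (hRpos j).le
  have hRsum : Summable R := by
    rw [hRdef]
    exact (summable_geometric_of_lt_one ha0.le ha1).mul_left ((1+a) * M)
  have hRtsum : ∑' j, R j = ((1+a) * M) * (1-a)⁻¹ := by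
    rw [hRdef, tsum_mul_left, tsum_geometric_of_lt_one ha0.le ha1]
  have hofsum : ∑' j, ENNReal.ofReal (R j) = ENNReal.ofReal (((1+a) * M) * (1-a)⁻¹) := by
    rw [← ENNReal.ofReal_tsum_of_nonneg hRnn hRsum, hRtsum]
  have hlintj : ∀ j, ∫⁻ ω, ENNReal.ofReal (r j ω) ∂μ = ENNReal.ofReal (R j) := by
    intro j
    rw [← ofReal_integral_eq_lintegral_ofReal (hrint j) (Filter.Eventually.of_forall (hrnn j)),
      hrR j]
  have hFlint : ∫⁻ ω, F ω ∂μ = ENNReal.ofReal (((1+a) * M) * (1-a)⁻¹) := by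
    rw [hFdef]
    rw [lintegral_tsum (fun j => ((hrmeas j).ennreal_ofReal).aemeasurable)]
    rw [tsum_congr hlintj, hofsum]
  have hFaefin : ∀ᵐ ω ∂μ, F ω < ⊤ :=
    ae_lt_top hFmeas (by rw [hFlint]; exact ENNReal.ofReal_ne_top)
  have hfnorm : ∀ ω, ‖f ω‖ = (F ω).toReal := by
    intro ω
    rw [hfdef]
    rw [Complex.norm_real, Real.norm_eq_abs, abs_of_nonneg ENNReal.toReal_nonneg]
  -- integrability
  have hfint : Integrable f μ := by
    refine ⟨hfmeas.aestronglyMeasurable, ?_⟩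
    show (∫⁻ ω, (‖f ω‖₊ : ℝ≥0∞) ∂μ) < ⊤
    have hle : ∀ ω, (‖f ω‖₊ : ℝ≥0∞) ≤ F ω := by
      intro ω
      rw [← enorm_eq_nnnorm, ← ofReal_norm, hfnorm ω]
      exact ENNReal.ofReal_toReal_le
    calc ∫⁻ ω, (‖f ω‖₊ : ℝ≥0∞) ∂μ ≤ ∫⁻ ω, F ω ∂μ := lintegral_mono hle
      _ < ⊤ := by rw [hFlint]; exact ENNReal.ofReal_lt_top
  -- norm bound
  have h1a : (0:ℝ) < 1 - a := by linarith
  have htail : ((1+a) * M) * (1-a)⁻¹ ≤ (1+ε') * M := by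
    have key : (1+a) * (1-a)⁻¹ ≤ 1 + ε' := by
      rw [inv_eq_one_div, ← div_eq_mul_one_div, div_le_iff₀ h1a]
      have : ε' = 4 * a := by rw [hadef]; ring
      nlinarith
    calc ((1+a) * M) * (1-a)⁻¹ = ((1+a) * (1-a)⁻¹) * M := by ring
      _ ≤ (1+ε') * M := mul_le_mul_of_nonneg_right key hM0
  have hnormle : ∫ ω, ‖f ω‖ ∂μ ≤ (1 + ε) * M := by
    calc ∫ ω, ‖f ω‖ ∂μ = ∫ ω, (F ω).toReal ∂μ := by
          exact integral_congr_ae (Filter.Eventually.of_forall hfnorm)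
      _ = (∫⁻ ω, F ω ∂μ).toReal := integral_toReal hFmeas.aemeasurable hFaefin
      _ = ((1+a) * M) * (1-a)⁻¹ := by
          rw [hFlint, ENNReal.toReal_ofReal (by positivity)]
      _ ≤ (1+ε') * M := htail
      _ ≤ (1+ε) * M := mul_le_mul_of_nonneg_right (by linarith) hM0
  -- the moments
  have hmomf : ∀ n, ∫ ω, f ω * s n ω ∂μ = x n := by
    intro n
    have hptws : ∀ ω, f ω * s n ω = ∑' j, ((r j ω : ℂ) * s n ω) := by
      intro ω
      rw [hfpt ω, ofReal_tsum_mul]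
    rw [integral_congr_ae (Filter.Eventually.of_forall hptws)]
    have hmeasj : ∀ j : ℕ, AEStronglyMeasurable (fun ω => ((r j ω : ℂ) * s n ω)) μ :=
      fun j => ((Complex.measurable_ofReal.comp (hrmeas j)).mul (hs.1 n)).aestronglyMeasurable
    have hlintj' : ∀ j, ∫⁻ ω, (‖(r j ω : ℂ) * s n ω‖₊ : ℝ≥0∞) ∂μ = ENNReal.ofReal (R j) := by
      intro j
      have hae : ∀ᵐ ω ∂μ, (‖(r j ω : ℂ) * s n ω‖₊ : ℝ≥0∞) = ENNReal.ofReal (r j ω) := by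
        filter_upwards [ae_circle hs] with ω hω
        rw [← enorm_eq_nnnorm, ← ofReal_norm, norm_mul, Complex.norm_real, Real.norm_eq_abs,
          abs_of_nonneg (hrnn j ω),
          show ‖s n ω‖ = 1 from by simp [hω n], mul_one]
      rw [lintegral_congr_ae hae]
      exact hlintj j
    rw [MeasureTheory.integral_tsum hmeasj (by
      simp only [enorm_eq_nnnorm]
      rw [tsum_congr hlintj', hofsum]
      exact ENNReal.ofReal_ne_top)]
    rw [tsum_congr (fun j => hrmom j n)]
    by_cases hxn : x n = 0
    · have hz : ∀ j : ℕ, (if n ∈ S j then x n else 0) = 0 := by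
        intro j; split <;> simp [hxn]
      rw [tsum_congr hz, tsum_zero, hxn]
    · have hxpos : 0 < ‖x n‖ := norm_pos_iff.mpr hxn
      have hPex : ∃ j, M * a ^ j < ‖x n‖ := by
        have htt : Tendsto (fun j : ℕ => M * a ^ j) atTop (nhds 0) := by
          simpa using (tendsto_pow_atTop_nhds_zero_of_lt_one ha0.le ha1).const_mul M
        exact (htt.eventually (gt_mem_nhds hxpos)).exists
      have hj1 : M * a ^ (Nat.find hPex) < ‖x n‖ := Nat.find_spec hPex
      have hj1ne : Nat.find hPex ≠ 0 := by
        intro h0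
        rw [h0, pow_zero, mul_one] at hj1
        exact absurd (hMle n) (not_le.mpr hj1)
      set j0 : ℕ := Nat.find hPex - 1 with hj0def
      have hsucc : j0 + 1 = Nat.find hPex := by omega
      have hnot : ¬ (M * a ^ j0 < ‖x n‖) := Nat.find_min hPex (by omega)
      have hle0 : ‖x n‖ ≤ M * a ^ j0 := not_lt.mp hnot
      have hmem : n ∈ S j0 := (hSmem j0 n).mpr ⟨by rw [hsucc]; exact hj1, hle0⟩
      have hone : ∀ (j : ℕ), j ≠ j0 → (if n ∈ S j then x n else 0) = 0 := by
        intro j hj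
        rw [if_neg]
        intro hmem'
        obtain ⟨h1', h2'⟩ := (hSmem j n).mp hmem'
        rcases lt_or_gt_of_ne hj with hlt | hgt
        · have hp : a ^ j0 ≤ a ^ (j+1) :=
            pow_le_pow_of_le_one ha0.le ha1.le (by omega)
          have : M * a ^ j0 ≤ M * a ^ (j+1) := mul_le_mul_of_nonneg_left hp hM0
          linarith
        · have hge : Nat.find hPex ≤ j := by omega
          have hp : a ^ j ≤ a ^ (Nat.find hPex) :=
            pow_le_pow_of_le_one ha0.le ha1.le hge
          have : M * a ^ j ≤ M * a ^ (Nat.find hPex) := mul_le_mul_of_nonneg_left hp hM0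
          linarith
      rw [tsum_eq_single j0 hone, if_pos hmem]
  exact ⟨f, hfint, hmomf, hnormle⟩
end
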